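/- Let n ≥ 1 be an integer and N = 2n+1. Then there exists an integer m such that det(T_{1,N}) = 2^{n+1−τ(N)} · m · N^{n/2}, i.e. the real number N^{−n/2}·det(T_{1,N}) is an integer divisible by 2^{n+1−τ(N)}. -/

import Mathlib

/-- For `N = 2n+1`, the tangent matrix `T_{m,N} = (tan^m(πij/N))_{1 ≤ i,j ≤ n}`. -/
noncomputable def tanMatrix (m n : ℕ) : Matrix (Fin n) (Fin n) ℝ :=
  Matrix.of fun i j =>
    Real.tan (Real.pi * ((i : ℕ) + 1) * ((j : ℕ) + 1) / (2 * n + 1)) ^ m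

open Real Finset Matrix

lemma alt_telescope (g : ℕ → ℝ) (k : ℕ) :
    ∑ l ∈ range k, (-1 : ℝ) ^ l * (g (l + 1) + g l) = g 0 - (-1) ^ k * g k := by
  induction k with
  | zero => simp
  | succ k ih => rw [Finset.sum_range_succ, ih, pow_succ]; ring

lemma cos_ne_zero' (n m : ℕ) : Real.cos (π * m / (2 * n + 1)) ≠ 0 := by
  rw [Real.cos_ne_zero_iff]
  intro k h
  have hden : ((2:ℝ) * n + 1) ≠ 0 := by positivity
  rw [div_eq_iff hden] at h
  have h2 : π * (2 * (m:ℝ)) = π * ((2 * k + 1) * (2 * n + 1)) := by ring_nf; ring_nf at h; linarith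
  have h2' := mul_left_cancel₀ Real.pi_ne_zero h2
  have h3 : (2 * (m:ℤ)) = (2 * k + 1) * (2 * n + 1) := by exact_mod_cast h2'
  have : (2 * k + 1) * (2 * n + 1) = 4 * (k * n) + 2 * k + 2 * n + 1 := by ring
  omega

lemma tan_expand (n m : ℕ) :
    Real.tan (π * m / (2 * n + 1)) =
      2 * ∑ l ∈ range n, (-1 : ℝ) ^ l * Real.sin (2 * π * m * (l + 1) / (2 * n + 1)) := by
  have hden : ((2:ℝ) * n + 1) ≠ 0 := by positivity
  have hcos := cos_ne_zero' n m
  set c := Real.cos (π * m / (2 * n + 1)) with hc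
  set g : ℕ → ℝ := fun l => Real.sin (π * m * (2 * l + 1) / (2 * n + 1)) with hg
  have key : ∀ l : ℕ, g (l + 1) + g l = 2 * Real.sin (2 * π * m * (l + 1) / (2 * n + 1)) * c := by
    intro l
    have expand : ∀ u v : ℝ, Real.sin (u + v) + Real.sin (u - v) = 2 * Real.sin u * Real.cos v := by
      intro u v; rw [Real.sin_add, Real.sin_sub]; ring
    rw [hg, hc]
    simp only []
    push_cast
    rw [show π * (m:ℝ) * (2 * ((l:ℝ) + 1) + 1) / (2 * n + 1)
          = 2 * π * m * (l + 1) / (2 * n + 1) + π * m / (2 * n + 1) by ring,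
        show π * (m:ℝ) * (2 * (l:ℝ) + 1) / (2 * n + 1)
          = 2 * π * m * (l + 1) / (2 * n + 1) - π * m / (2 * n + 1) by ring]
    exact expand _ _
  have tel := alt_telescope g n
  have sum_eq : ∑ l ∈ range n, (-1 : ℝ) ^ l * (g (l + 1) + g l)
      = (2 * ∑ l ∈ range n, (-1 : ℝ) ^ l * Real.sin (2 * π * m * (l + 1) / (2 * n + 1))) * c := by
    rw [Finset.mul_sum, Finset.sum_mul]
    exact Finset.sum_congr rfl fun l _ => by rw [key l]; ring
  have g0 : g 0 = Real.sin (π * m / (2 * n + 1)) := by simp [hg]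
  have gn : g n = 0 := by
    have : π * m * (2 * n + 1) / (2 * n + 1) = m * π := by field_simp
    rw [hg]
    simp only []
    push_cast
    rw [this, Real.sin_nat_mul_pi]
  rw [sum_eq, g0, gn] at tel
  rw [Real.tan_eq_sin_div_cos, div_eq_iff (hc ▸ hcos), ← hc]
  rw [tel]; ring

lemma sin_pi_int_div_ne_zero (n : ℕ) (k : ℤ) (hk : ¬ ((2 * (n:ℤ) + 1) ∣ k)) :
    Real.sin (π * k / (2 * n + 1)) ≠ 0 := by
  have hden : ((2:ℝ) * n + 1) ≠ 0 := by positivity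
  intro h
  rw [Real.sin_eq_zero_iff] at h
  obtain ⟨l, hl⟩ := h
  apply hk
  have h2 : π * ((l:ℝ) * (2 * n + 1)) = π * k := by
    field_simp at hl
    rw [hl]
  have h2' := mul_left_cancel₀ Real.pi_ne_zero h2
  have h3 : (l * (2 * (n:ℤ) + 1)) = k := by exact_mod_cast h2'
  exact Dvd.intro_left l h3

lemma cos_sum_eq (n : ℕ) (k : ℤ) (hk : ¬ ((2 * (n:ℤ) + 1) ∣ k)) :
    ∑ m ∈ range n, Real.cos (2 * π * k * (m + 1) / (2 * n + 1)) = -(1/2) := by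
  have hden : ((2:ℝ) * n + 1) ≠ 0 := by positivity
  set v := π * k / (2 * n + 1) with hv
  have hsv : Real.sin v ≠ 0 := sin_pi_int_div_ne_zero n k hk
  set h : ℕ → ℝ := fun m => Real.sin (2 * π * k * m / (2 * n + 1) + v) with hh
  have key : ∀ m : ℕ, Real.cos (2 * π * k * (m + 1) / (2 * n + 1)) * (2 * Real.sin v)
      = h (m + 1) - h m := by
    intro m
    have expand : ∀ u w : ℝ, Real.sin (u + w) - Real.sin (u - w) = 2 * Real.cos u * Real.sin w := by
      intro u w; rw [Real.sin_add, Real.sin_sub]; ring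
    rw [hh, hv]
    simp only []
    push_cast
    rw [show 2 * π * (k:ℝ) * ((m:ℝ) + 1) / (2 * n + 1) + π * k / (2 * n + 1)
          = 2 * π * k * (m + 1) / (2 * n + 1) + π * k / (2 * n + 1) by ring,
        show 2 * π * (k:ℝ) * (m:ℝ) / (2 * n + 1) + π * k / (2 * n + 1)
          = 2 * π * k * (m + 1) / (2 * n + 1) - π * k / (2 * n + 1) by ring]
    rw [expand]; ring
  have tel : ∑ m ∈ range n, (h (m + 1) - h m) = h n - h 0 := Finset.sum_range_sub h n
  have hsum : (∑ m ∈ range n, Real.cos (2 * π * k * (m + 1) / (2 * n + 1))) * (2 * Real.sin v)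
      = h n - h 0 := by rw [Finset.sum_mul, ← tel]; exact Finset.sum_congr rfl fun m _ => key m
  have hn0 : h n = 0 := by
    rw [hh]; simp only [hv]
    rw [show 2 * π * (k:ℝ) * (n:ℝ) / (2 * n + 1) + π * k / (2 * n + 1) = (k:ℝ) * π by
      field_simp]
    exact Real.sin_int_mul_pi k
  have h00 : h 0 = Real.sin v := by rw [hh]; simp
  rw [hn0, h00] at hsum
  have : (∑ m ∈ range n, Real.cos (2 * π * k * (m + 1) / (2 * n + 1))) * (2 * Real.sin v)
      = (-(1/2)) * (2 * Real.sin v) := by rw [hsum]; ring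
  exact mul_right_cancel₀ (by simpa using hsv) this

noncomputable def Emat (n : ℕ) : Matrix (Fin n) (Fin n) ℝ :=
  Matrix.of fun i m =>
    Real.sin (2 * π * ((i : ℕ) + 1) * ((m : ℕ) + 1) / (2 * n + 1))

lemma cos_sum_zero (n : ℕ) :
    ∑ m ∈ range n, Real.cos (2 * π * (0:ℤ) * (m + 1) / (2 * n + 1)) = n := by
  rw [Finset.sum_congr rfl (fun m _ => by norm_num : ∀ m ∈ range n,
    Real.cos (2 * π * ((0:ℤ):ℝ) * (m + 1) / (2 * n + 1)) = 1)]
  simp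

lemma E_mul_Et (n : ℕ) :
    Emat n * (Emat n)ᵀ = (((2 * n + 1 : ℝ)) / 4) • (1 : Matrix (Fin n) (Fin n) ℝ) := by
  ext i j
  rw [Matrix.mul_apply]
  simp only [Matrix.transpose_apply, Emat, Matrix.of_apply, Matrix.smul_apply,
    Matrix.one_apply, smul_eq_mul]
  have key : ∀ m : Fin n,
      Real.sin (2 * π * ((i:ℕ) + 1) * ((m:ℕ) + 1) / (2 * n + 1)) *
        Real.sin (2 * π * ((j:ℕ) + 1) * ((m:ℕ) + 1) / (2 * n + 1))
      = (Real.cos (2 * π * (((i:ℤ) - (j:ℤ) : ℤ) : ℝ) * ((m:ℕ) + 1) / (2 * n + 1))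
        - Real.cos (2 * π * (((i:ℤ) + (j:ℤ) + 2 : ℤ) : ℝ) * ((m:ℕ) + 1) / (2 * n + 1))) / 2 := by
    intro m
    have p2s : ∀ x y : ℝ, Real.sin x * Real.sin y = (Real.cos (x - y) - Real.cos (x + y)) / 2 := by
      intro x y; rw [Real.cos_sub, Real.cos_add]; ring
    rw [p2s]
    congr 2
    · push_cast; ring
    · push_cast; ring
  rw [Finset.sum_congr rfl (fun m _ => key m)]
  have split : ∑ m : Fin n,
      (Real.cos (2 * π * (((i:ℤ) - (j:ℤ) : ℤ) : ℝ) * ((m:ℕ) + 1) / (2 * n + 1))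
        - Real.cos (2 * π * (((i:ℤ) + (j:ℤ) + 2 : ℤ) : ℝ) * ((m:ℕ) + 1) / (2 * n + 1))) / 2
      = ((∑ m ∈ range n, Real.cos (2 * π * (((i:ℤ) - (j:ℤ) : ℤ) : ℝ) * ((m:ℕ) + 1) / (2 * n + 1)))
        - (∑ m ∈ range n, Real.cos (2 * π * (((i:ℤ) + (j:ℤ) + 2 : ℤ) : ℝ) * ((m:ℕ) + 1) / (2 * n + 1)))) / 2 := by
    rw [← Finset.sum_sub_distrib, ← Finset.sum_div]
    rw [← Fin.sum_univ_eq_sum_range (fun m : ℕ =>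
      Real.cos (2 * π * (((i:ℤ) - (j:ℤ) : ℤ) : ℝ) * ((m:ℕ) + 1) / (2 * n + 1))
        - Real.cos (2 * π * (((i:ℤ) + (j:ℤ) + 2 : ℤ) : ℝ) * ((m:ℕ) + 1) / (2 * n + 1))) n]
  rw [split]
  have hsum2 : ∑ m ∈ range n, Real.cos (2 * π * (((i:ℤ) + (j:ℤ) + 2 : ℤ) : ℝ) * ((m:ℕ) + 1) / (2 * n + 1)) = -(1/2) := by
    apply cos_sum_eq
    intro hdvd
    have h1 : (0:ℤ) < (i:ℤ) + (j:ℤ) + 2 := by omega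
    have h2 := Int.le_of_dvd h1 hdvd
    have hi := i.isLt; have hj := j.isLt
    omega
  by_cases hij : i = j
  · subst hij
    have : ((i:ℤ) - (i:ℤ)) = (0:ℤ) := by ring
    rw [this, cos_sum_zero, hsum2]
    simp
    ring
  · have hsum1 : ∑ m ∈ range n, Real.cos (2 * π * (((i:ℤ) - (j:ℤ) : ℤ) : ℝ) * ((m:ℕ) + 1) / (2 * n + 1)) = -(1/2) := by
      apply cos_sum_eq
      intro hdvd
      have hne : ((i:ℤ) - (j:ℤ)) ≠ 0 := by
        intro h; apply hij; apply Fin.ext; omega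
      have := Int.eq_zero_of_abs_lt_dvd hdvd ?_
      · exact hne this
      · have hi := i.isLt; have hj := j.isLt
        rw [abs_lt]; omega
    rw [hsum1, hsum2]
    rw [if_neg hij]
    ring

def Bmat (n : ℕ) : Matrix (Fin n) (Fin n) ℤ :=
  Matrix.of fun m j => ∑ x ∈ Finset.Ico 1 (2 * n + 1),
    (-1 : ℤ) ^ (x + 1) * (if (x * ((j : ℕ) + 1)) % (2 * n + 1) = (m : ℕ) + 1 then 1 else 0)

lemma sum_Ico_reflect (N : ℕ) (f : ℕ → ℝ) :
    ∑ x ∈ Finset.Ico 1 N, f (N - x) = ∑ x ∈ Finset.Ico 1 N, f x := by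
  apply Finset.sum_nbij' (fun x => N - x) (fun x => N - x)
  · intro a ha; simp only [Finset.mem_Ico] at *; omega
  · intro a ha; simp only [Finset.mem_Ico] at *; omega
  · intro a ha; simp only [Finset.mem_Ico] at *; omega
  · intro a ha; simp only [Finset.mem_Ico] at *; omega
  · intro a ha; rfl

lemma neg_one_pow_reflect (n x : ℕ) (hx : x ≤ 2 * n + 1) :
    (-1 : ℝ) ^ (2 * n + 1 - x + 1) = -(-1 : ℝ) ^ (x + 1) := by
  have h1 : (-1 : ℝ) ^ (2 * n + 1 - x + 1) * (-1) ^ (x + 1) = -1 := by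
    rw [← pow_add]
    have : 2 * n + 1 - x + 1 + (x + 1) = 2 * (n + 1) + (2 * n + 1 - x) - (2 * n + 1 - x) + 1 := by omega
    have h2 : 2 * n + 1 - x + 1 + (x + 1) = 2 * (n + 1) + 1 := by omega
    rw [h2, pow_succ, pow_mul]
    norm_num
  have h3 : ((-1 : ℝ) ^ (x + 1)) * ((-1 : ℝ) ^ (x + 1)) = 1 := by
    rw [← pow_add, ← two_mul, pow_mul]
    norm_num
  have h4 : (-1 : ℝ) ^ (2 * n + 1 - x + 1)
      = ((-1 : ℝ) ^ (2 * n + 1 - x + 1) * (-1) ^ (x + 1)) * (-1) ^ (x + 1) := by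
    rw [mul_assoc, h3, mul_one]
  rw [h4, h1]; ring

lemma sin_reflect (n c x : ℕ) (hx : x ≤ 2 * n + 1) :
    Real.sin (2 * π * c * ((2 * n + 1 - x : ℕ) : ℝ) / (2 * n + 1)) =
      - Real.sin (2 * π * c * x / (2 * n + 1)) := by
  have hden : ((2:ℝ) * n + 1) ≠ 0 := by positivity
  have hcast : ((2 * n + 1 - x : ℕ) : ℝ) = (2 * n + 1 : ℝ) - x := by
    push_cast [Nat.cast_sub hx]; ring
  rw [hcast]
  have harg : 2 * π * c * ((2 * n + 1 : ℝ) - x) / (2 * n + 1)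
      = -(2 * π * c * x / (2 * n + 1)) + c * (2 * π) := by
    field_simp; ring
  rw [harg, Real.sin_add_nat_mul_two_pi, Real.sin_neg]

lemma sin_mod (n a t : ℕ) :
    Real.sin (2 * π * a * t / (2 * n + 1)) =
      Real.sin (2 * π * a * ((t % (2 * n + 1) : ℕ) : ℝ) / (2 * n + 1)) := by
  have hden : ((2:ℝ) * n + 1) ≠ 0 := by positivity
  have hdm : (2 * n + 1) * (t / (2 * n + 1)) + t % (2 * n + 1) = t := Nat.div_add_mod t (2 * n + 1)
  have hcast : (t : ℝ) = ((2:ℝ) * n + 1) * ((t / (2 * n + 1) : ℕ) : ℝ) + ((t % (2 * n + 1) : ℕ) : ℝ) := by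
    exact_mod_cast congrArg (Nat.cast : ℕ → ℝ) hdm.symm
  rw [show 2 * π * a * (t:ℝ) / (2 * n + 1)
      = 2 * π * a * ((t % (2 * n + 1) : ℕ) : ℝ) / (2 * n + 1)
        + (a * (t / (2 * n + 1) : ℕ) : ℕ) * (2 * π) by
    push_cast
    rw [hcast]
    field_simp
    ring]
  rw [Real.sin_add_nat_mul_two_pi]

lemma entry_eq (n : ℕ) (i j : Fin n) :
    tanMatrix 1 n i j = (Emat n * ((2:ℝ) • (Bmat n).map (Int.cast : ℤ → ℝ))) i j := by
  have hden : ((2:ℝ) * n + 1) ≠ 0 := by positivity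
  set N := 2 * n + 1 with hN
  set a := (i : ℕ) + 1 with ha
  set b := (j : ℕ) + 1 with hb
  set F : ℕ → ℝ := fun x => (-1 : ℝ) ^ (x + 1) * Real.sin (2 * π * (a * b : ℕ) * x / (2 * n + 1)) with hF
  set G : ℕ → ℝ := fun x => (-1 : ℝ) ^ (x + 1) *
    (if (x * b) % N ≤ n then Real.sin (2 * π * (a : ℕ) * (((x * b) % N : ℕ) : ℝ) / (2 * n + 1)) else 0) with hG
  -- Step 1: T i j = 2 * ∑_{x ∈ Ico 1 (n+1)} F x
  have step1 : tanMatrix 1 n i j = 2 * ∑ x ∈ Finset.Ico 1 (n + 1), F x := by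
    show Real.tan (π * ((i : ℕ) + 1) * ((j : ℕ) + 1) / (2 * n + 1)) ^ 1 = _
    rw [pow_one]
    rw [show π * ((i:ℕ) + 1 : ℝ) * ((j:ℕ) + 1 : ℝ) / (2 * n + 1) = π * ((a * b : ℕ) : ℝ) / (2 * n + 1) by
      push_cast [ha, hb]; ring]
    rw [tan_expand n (a * b)]
    congr 1
    rw [Finset.sum_Ico_eq_sum_range]
    simp only [Nat.add_sub_cancel]
    apply Finset.sum_congr rfl
    intro l _
    rw [hF]
    simp only []
    rw [show (-1:ℝ)^(1 + l + 1) = (-1:ℝ)^l by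
      rw [show 1 + l + 1 = l + 2 by omega, pow_add]; norm_num]
    congr 2
    push_cast; ring
  -- Step 2: ∑_{Ico 1 N} F = 2 * ∑_{Ico 1 (n+1)} F
  have hrefl : ∀ x, 1 ≤ x → x ≤ 2 * n → F (N - x) = F x := by
    intro x h1 h2
    rw [hF]; simp only [hN]
    rw [neg_one_pow_reflect n x (by omega), sin_reflect n (a * b) x (by omega)]
    ring
  have step2 : ∑ x ∈ Finset.Ico 1 N, F x = 2 * ∑ x ∈ Finset.Ico 1 (n + 1), F x := by
    rw [← Finset.sum_Ico_consecutive F (by omega : 1 ≤ n + 1) (by omega : n + 1 ≤ N)]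
    have : ∑ x ∈ Finset.Ico (n + 1) N, F x = ∑ x ∈ Finset.Ico 1 (n + 1), F x := by
      apply Finset.sum_nbij' (fun x => N - x) (fun x => N - x)
      · intro x hx; simp only [Finset.mem_Ico, hN] at *; omega
      · intro x hx; simp only [Finset.mem_Ico, hN] at *; omega
      · intro x hx; simp only [Finset.mem_Ico, hN] at *; omega
      · intro x hx; simp only [Finset.mem_Ico, hN] at *; omega
      · intro x hx; simp only [Finset.mem_Ico, hN] at hx
        exact (hrefl x (by omega) (by omega)).symm
    rw [this]; ring
  -- Step 3: pointwise F x - G x = G (N - x)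
  have hFr : ∀ x : ℕ, F x = (-1 : ℝ) ^ (x + 1) *
      Real.sin (2 * π * (a : ℕ) * (((x * b) % N : ℕ) : ℝ) / (2 * n + 1)) := by
    intro x
    rw [hF]; simp only []
    congr 1
    rw [show 2 * π * ((a * b : ℕ) : ℝ) * (x : ℝ) / (2 * n + 1)
        = 2 * π * (a : ℕ) * ((x * b : ℕ) : ℝ) / (2 * n + 1) by push_cast; ring]
    rw [sin_mod n a (x * b), hN]
  have step3 : ∀ x ∈ Finset.Ico 1 N, F x - G x = G (N - x) := by
    intro x hx
    simp only [Finset.mem_Ico] at hx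
    set r := (x * b) % N with hr
    have hrN : r < N := Nat.mod_lt _ (by omega)
    have hr' : ((N - x) * b) % N = (N - r) % N := by
      have h1 : (N - x) * b + x * b = N * b := by
        have : N - x + x = N := by omega
        calc (N - x) * b + x * b = (N - x + x) * b := by ring
        _ = N * b := by rw [this]
      have h2 : ((N - x) * b + x * b) % N = 0 := by rw [h1]; simp [Nat.mul_mod_right]
      have h3 : (((N - x) * b) % N + r) % N = 0 := by
        rw [hr, ← Nat.add_mod]; exact h2
      have h4 : ((N - x) * b) % N < N := Nat.mod_lt _ (by omega)
      have h6 : ((N - x) * b) % N + r = 0 ∨ ((N - x) * b) % N + r = N := by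
        rcases Nat.lt_or_ge (((N - x) * b) % N + r) N with h | h
        · left; rwa [Nat.mod_eq_of_lt h] at h3
        · right
          rw [Nat.mod_eq_sub_mod h, Nat.mod_eq_of_lt (by omega)] at h3
          omega
      rcases Nat.eq_zero_or_pos r with h5 | h5
      · have hu : ((N - x) * b) % N = 0 := by omega
        rw [hu, h5, Nat.sub_zero, Nat.mod_self]
      · have hu : ((N - x) * b) % N = N - r := by omega
        rw [hu, Nat.mod_eq_of_lt (by omega)]
    rcases Nat.eq_zero_or_pos r with h0 | h0
    · -- r = 0
      have hF0 : F x = 0 := by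
        rw [hFr x, ← hr, h0]; simp
      have hG0 : G x = 0 := by
        rw [hG]; simp only [← hr, h0, hN]; simp
        intro _; rw [← hN, ← hr, h0]; simp
      have hG0' : G (N - x) = 0 := by
        rw [hG]; simp only [hr' ,h0, hN] at *
        simp
        intro _; rw [hr']; simp
      rw [hF0, hG0, hG0']; ring
    · have hrr : ((N - x) * b) % N = N - r := by rw [hr']; rw [Nat.mod_eq_of_lt (by omega)]
      by_cases hle : r ≤ n
      · -- small r : F x = G x, G (N - x) = 0
        have hFG : F x = G x := by
          rw [hFr x, hG]; simp only [← hr]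
          rw [if_pos hle]
        have hG0' : G (N - x) = 0 := by
          rw [hG]; simp only [hrr]
          rw [if_neg (by omega)]
          ring
        rw [hFG, hG0']; ring
      · -- large r: G x = 0, G (N - x) = F x
        have hG0 : G x = 0 := by
          rw [hG]; simp only [← hr]
          rw [if_neg hle]; ring
        have hGF : G (N - x) = F x := by
          rw [hFr x, hG]; simp only [hrr, ← hr]
          rw [if_pos (by omega : N - r ≤ n)]
          rw [show ((N - r : ℕ) : ℝ) = ((2 * n + 1 - r : ℕ) : ℝ) by rw [hN]]
          rw [sin_reflect n a r (by omega), neg_one_pow_reflect n x (by omega)]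
          ring
        rw [hG0, hGF]; ring
  have step3' : ∑ x ∈ Finset.Ico 1 N, F x = 2 * ∑ x ∈ Finset.Ico 1 N, G x := by
    have h1 : ∑ x ∈ Finset.Ico 1 N, (F x - G x) = ∑ x ∈ Finset.Ico 1 N, G (N - x) :=
      Finset.sum_congr rfl step3
    rw [sum_Ico_reflect N G] at h1
    rw [Finset.sum_sub_distrib] at h1
    linarith [h1]
  -- Step 4: RHS = 2 * ∑_{Ico 1 N} G x
  have step4 : (Emat n * ((2:ℝ) • (Bmat n).map (Int.cast : ℤ → ℝ))) i j
      = 2 * ∑ x ∈ Finset.Ico 1 N, G x := by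
    rw [Matrix.mul_apply]
    have hentry : ∀ m : Fin n, Emat n i m * ((2:ℝ) • (Bmat n).map (Int.cast : ℤ → ℝ)) m j
        = 2 * ∑ x ∈ Finset.Ico 1 N, (-1 : ℝ) ^ (x + 1) *
            (if (x * b) % N = (m : ℕ) + 1 then Real.sin (2 * π * (a:ℕ) * ((m:ℕ) + 1) / (2 * n + 1)) else 0) := by
      intro m
      simp only [Matrix.smul_apply, Matrix.map_apply, smul_eq_mul, Emat, Bmat, Matrix.of_apply]
      push_cast
      rw [Finset.mul_sum, Finset.mul_sum, Finset.mul_sum]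
      apply Finset.sum_congr rfl
      intro x _
      by_cases hc : (x * b) % N = (m : ℕ) + 1
      · have hc' : x * ((j:ℕ) + 1) % (2 * n + 1) = (m : ℕ) + 1 := by
          rw [← hb, ← hN]; exact hc
        rw [if_pos hc', if_pos hc]
        rw [ha]; push_cast; ring
      · have hc' : ¬ (x * ((j:ℕ) + 1) % (2 * n + 1) = (m : ℕ) + 1) := by
          rw [← hb, ← hN]; exact hc
        rw [if_neg hc', if_neg hc]
        ring
    rw [Finset.sum_congr rfl (fun m _ => hentry m)]
    rw [← Finset.mul_sum, Finset.sum_comm]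
    congr 1
    apply Finset.sum_congr rfl
    intro x hx
    simp only [Finset.mem_Ico] at hx
    set r := (x * b) % N with hr
    have hrN : r < N := Nat.mod_lt _ (by omega)
    rw [hG]; simp only [← hr]
    rw [← Finset.mul_sum]
    congr 1
    rcases Nat.eq_zero_or_pos r with h0 | h0
    · rw [h0]
      rw [if_pos (by omega : 0 ≤ n)]
      simp
    · by_cases hle : r ≤ n
      · rw [if_pos hle]
        rw [Finset.sum_eq_single (⟨r - 1, by omega⟩ : Fin n)]
        · rw [if_pos (by simp; omega)]
          congr 2
          simp only [Fin.val_mk]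
          rw [Nat.cast_sub (by omega : 1 ≤ r)]
          push_cast; ring
        · intro m _ hm
          rw [if_neg]
          intro hcon
          apply hm
          apply Fin.ext
          simp
          omega
        · intro hcon
          exact absurd (Finset.mem_univ _) hcon
      · rw [if_neg hle]
        apply Finset.sum_eq_zero
        intro m _
        rw [if_neg]
        have := m.isLt
        omega
  rw [step1, ← step2, step3', step4]

lemma dvd_det_of_cols {n : ℕ} (s : Finset (Fin n)) (g : Fin n → Fin n)
    (M : Matrix (Fin n) (Fin n) ℤ)
    (hgs : ∀ j ∈ s, g j ∉ s)
    (hcong : ∀ j ∈ s, ∀ i, (2:ℤ) ∣ (M i j - M i (g j))) :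
    (2:ℤ) ^ s.card ∣ M.det := by
  induction s using Finset.induction_on generalizing M with
  | empty => simp
  | insert _ _ ha =>
    rename_i a t ih
    have hmem : a ∈ insert a t := Finset.mem_insert_self a t
    have hga : g a ∉ insert a t := hgs a hmem
    have hgane : g a ≠ a := fun h => hga (by rw [h]; exact hmem)
    have hdvd := hcong a hmem
    have hM : M = M.updateCol a (fun i => M i (g a) + 2 * ((M i a - M i (g a)) / 2)) := by
      ext i j
      rw [Matrix.updateCol_apply]
      split_ifs with h
      · subst h; rw [Int.mul_ediv_cancel' (hdvd i)]; ring
      · rfl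
    have h1 : (M.updateCol a (fun i => M i (g a) + 2 * ((M i a - M i (g a)) / 2))).det
        = (M.updateCol a (fun i => M i (g a))).det
          + (M.updateCol a (fun i => 2 * ((M i a - M i (g a)) / 2))).det :=
      Matrix.det_updateCol_add M a _ _
    have h2 : (M.updateCol a (fun i => M i (g a))).det = 0 := by
      apply Matrix.det_zero_of_column_eq hgane.symm
      intro k
      rw [Matrix.updateCol_self, Matrix.updateCol_ne hgane]
    have h3 : (M.updateCol a (fun i => 2 * ((M i a - M i (g a)) / 2))).det
        = 2 * (M.updateCol a (fun i => (M i a - M i (g a)) / 2)).det :=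
      Matrix.det_updateCol_smul M a 2 _
    have h4 : (2:ℤ) ^ t.card ∣ (M.updateCol a (fun i => (M i a - M i (g a)) / 2)).det := by
      apply ih
      · intro j hj
        exact fun hmem' => hgs j (Finset.mem_insert_of_mem hj) (Finset.mem_insert_of_mem hmem')
      · intro j hj i
        have hja : j ≠ a := fun h => ha (h ▸ hj)
        have hgja : g j ≠ a := by
          intro h
          exact hgs j (Finset.mem_insert_of_mem hj) (by rw [h]; exact hmem)
        rw [Matrix.updateCol_ne hja, Matrix.updateCol_ne hgja]
        exact hcong j (Finset.mem_insert_of_mem hj) i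
    obtain ⟨c, hc⟩ := h4
    rw [Finset.card_insert_of_notMem ha, pow_succ]
    refine ⟨c, ?_⟩
    calc M.det = (M.updateCol a (fun i => M i (g a) + 2 * ((M i a - M i (g a)) / 2))).det := by
          rw [← hM]
    _ = 0 + 2 * (M.updateCol a (fun i => (M i a - M i (g a)) / 2)).det := by rw [h1, h2, h3]
    _ = 2 ^ t.card * 2 * c := by rw [hc]; ring

lemma count_solutions (N j m : ℕ) (hN : 0 < N) (hm : 0 < m) (hmN : m < N) :
    ((Finset.Ico 1 N).filter fun x => x * j % N = m).card
      = if Nat.gcd j N ∣ m then Nat.gcd j N else 0 := by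
  set d := Nat.gcd j N with hd
  have hdN : d ∣ N := Nat.gcd_dvd_right j N
  have hdj : d ∣ j := Nat.gcd_dvd_left j N
  have hdpos : 0 < d := Nat.gcd_pos_of_pos_right j hN
  by_cases hdm : d ∣ m
  · rw [if_pos hdm]
    have hj : j ≠ 0 := by
      intro h
      have hdN2 : d = N := by rw [hd, h, Nat.gcd_zero_left]
      have : N ∣ m := hdN2 ▸ hdm
      exact absurd (Nat.le_of_dvd hm this) (by omega)
    set N' := N / d with hN'
    set j' := j / d with hj'
    set m' := m / d with hm'
    have hNd : N = d * N' := (Nat.mul_div_cancel' hdN).symm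
    have hjd : j = d * j' := (Nat.mul_div_cancel' hdj).symm
    have hmd : m = d * m' := (Nat.mul_div_cancel' hdm).symm
    have hN'pos : 0 < N' := by
      rcases Nat.eq_zero_or_pos N' with h | h
      · rw [h, mul_zero] at hNd; omega
      · exact h
    have hm'pos : 0 < m' := by
      rcases Nat.eq_zero_or_pos m' with h | h
      · rw [h, mul_zero] at hmd; omega
      · exact h
    have hm'N' : m' < N' := by
      by_contra h
      push_neg at h
      have : N ≤ m := by rw [hNd, hmd]; exact Nat.mul_le_mul_left d h
      omega
    have hcop : Nat.Coprime j' N' := Nat.coprime_div_gcd_div_gcd hdpos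
    haveI : NeZero N' := ⟨by omega⟩
    -- solution x₀
    set u := ZMod.unitOfCoprime j' hcop with hu
    set z : ZMod N' := (u⁻¹ : (ZMod N')ˣ) * (m' : ZMod N') with hz
    set x₀ := z.val with hx₀
    have hx₀lt : x₀ < N' := ZMod.val_lt z
    have hsol : j' * x₀ ≡ m' [MOD N'] := by
      rw [← ZMod.natCast_eq_natCast_iff]
      push_cast
      rw [show ((x₀ : ℕ) : ZMod N') = z by rw [hx₀, ZMod.natCast_val, ZMod.cast_id]]
      rw [hz, ← mul_assoc, show ((j' : ℕ) : ZMod N') = (u : ZMod N') by rw [hu, ZMod.coe_unitOfCoprime]]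
      rw [Units.mul_inv, one_mul]
    have hx₀pos : 0 < x₀ := by
      rcases Nat.eq_zero_or_pos x₀ with h | h
      · exfalso
        rw [h, Nat.mul_zero] at hsol
        have : m' % N' = 0 := by
          have := hsol.symm
          rwa [Nat.ModEq, Nat.zero_mod] at this
        rw [Nat.mod_eq_of_lt hm'N'] at this
        omega
      · exact h
    -- characterization of solutions
    have hchar : ∀ x, (x * j % N = m ↔ x ≡ x₀ [MOD N']) := by
      intro x
      constructor
      · intro h
        have h1 : x * j ≡ m [MOD N] := by
          rw [Nat.ModEq, Nat.mod_eq_of_lt hmN]; exact h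
        have h2 : d * (j' * x) ≡ d * m' [MOD d * N'] := by
          rw [← hNd, ← hmd]
          calc d * (j' * x) = x * j := by rw [hjd]; ring
          _ ≡ m [MOD N] := h1
        have h3 : j' * x ≡ m' [MOD N'] := Nat.ModEq.mul_left_cancel' (by omega) h2
        have h4 : j' * x ≡ j' * x₀ [MOD N'] := h3.trans hsol.symm
        exact Nat.ModEq.cancel_left_of_coprime (Nat.coprime_comm.mp hcop) h4
      · intro h
        have h1 : j' * x ≡ j' * x₀ [MOD N'] := Nat.ModEq.mul_left j' h
        have h2 : j' * x ≡ m' [MOD N'] := h1.trans hsol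
        have h3 : d * (j' * x) ≡ d * m' [MOD d * N'] := Nat.ModEq.mul_left' d h2
        have h4 : x * j ≡ m [MOD N] := by
          rw [hNd, hmd]
          calc x * j = d * (j' * x) := by rw [hjd]; ring
          _ ≡ d * m' [MOD d * N'] := h3
        rw [Nat.ModEq, Nat.mod_eq_of_lt hmN] at h4
        exact h4
    -- solutions = image
    have himg : (Finset.Ico 1 N).filter (fun x => x * j % N = m)
        = (Finset.range d).image (fun t => x₀ + t * N') := by
      ext y
      simp only [Finset.mem_filter, Finset.mem_Ico, Finset.mem_image, Finset.mem_range]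
      constructor
      · rintro ⟨⟨hy1, hy2⟩, hy3⟩
        have hyx : y % N' = x₀ := by
          have h5 := (hchar y).mp hy3
          rwa [Nat.ModEq, Nat.mod_eq_of_lt hx₀lt] at h5
        refine ⟨y / N', ?_, ?_⟩
        · by_contra hcon
          push_neg at hcon
          have : N ≤ y := by
            calc N = d * N' := hNd
            _ ≤ (y / N') * N' := mul_le_mul_left hcon N'
            _ ≤ y := Nat.div_mul_le_self y N'
          omega
        · have hdm2 := Nat.div_add_mod y N'
          have hcomm : y / N' * N' = N' * (y / N') := Nat.mul_comm _ _
          omega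
      · rintro ⟨t, ht, rfl⟩
        refine ⟨⟨by omega, ?_⟩, ?_⟩
        · calc x₀ + t * N' < N' + t * N' := by omega
          _ = (t + 1) * N' := by ring
          _ ≤ d * N' := mul_le_mul_left (by omega : t + 1 ≤ d) N'
          _ = N := hNd.symm
        · apply (hchar _).mpr
          rw [Nat.ModEq]
          rw [Nat.add_mul_mod_self_right]
    rw [himg, Finset.card_image_of_injective _ ?_, Finset.card_range]
    intro t1 t2 h
    have h' : x₀ + t1 * N' = x₀ + t2 * N' := h
    have : t1 * N' = t2 * N' := by omega
    exact Nat.eq_of_mul_eq_mul_right hN'pos this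
  · rw [if_neg hdm]
    rw [Finset.card_eq_zero, Finset.filter_eq_empty_iff]
    intro x _
    intro hcon
    apply hdm
    rw [← hcon]
    exact (Nat.dvd_mod_iff hdN).mpr (Dvd.dvd.mul_left hdj x)

lemma Bmat_sub_ite (n : ℕ) (m j : Fin n) :
    (2:ℤ) ∣ Bmat n m j -
      (if Nat.gcd ((j:ℕ)+1) (2*n+1) ∣ (m:ℕ)+1 then (Nat.gcd ((j:ℕ)+1) (2*n+1) : ℤ) else 0) := by
  have h1 : (2:ℤ) ∣ Bmat n m j - ∑ x ∈ Finset.Ico 1 (2*n+1),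
      (if x * ((j:ℕ)+1) % (2*n+1) = (m:ℕ)+1 then (1:ℤ) else 0) := by
    rw [Bmat, Matrix.of_apply, ← Finset.sum_sub_distrib]
    apply Finset.dvd_sum
    intro x _
    have : (-1:ℤ)^(x+1) * (if x * ((j:ℕ)+1) % (2*n+1) = (m:ℕ)+1 then (1:ℤ) else 0)
        - (if x * ((j:ℕ)+1) % (2*n+1) = (m:ℕ)+1 then (1:ℤ) else 0)
        = ((-1:ℤ)^(x+1) - 1) * (if x * ((j:ℕ)+1) % (2*n+1) = (m:ℕ)+1 then (1:ℤ) else 0) := by ring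
    rw [this]
    apply Dvd.dvd.mul_right
    rcases Nat.even_or_odd (x+1) with h | h
    · rw [h.neg_one_pow]; norm_num
    · rw [h.neg_one_pow]; norm_num
  have h2 : ∑ x ∈ Finset.Ico 1 (2*n+1),
      (if x * ((j:ℕ)+1) % (2*n+1) = (m:ℕ)+1 then (1:ℤ) else 0)
      = (if Nat.gcd ((j:ℕ)+1) (2*n+1) ∣ (m:ℕ)+1 then (Nat.gcd ((j:ℕ)+1) (2*n+1) : ℤ) else 0) := by
    rw [Finset.sum_boole]
    rw [count_solutions (2*n+1) ((j:ℕ)+1) ((m:ℕ)+1) (by omega) (by omega)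
      (by have := m.isLt; omega)]
    split_ifs <;> simp
  rw [← h2]
  exact h1

lemma Bmat_dvd_det (n : ℕ) (hn : 1 ≤ n) :
    (2:ℤ) ^ (n + 1 - (2 * n + 1).divisors.card) ∣ (Bmat n).det := by
  set N := 2 * n + 1 with hN
  set s : Finset (Fin n) := Finset.univ.filter (fun j : Fin n => ¬ ((j:ℕ)+1 ∣ N)) with hs
  have hgdef : ∀ j : Fin n, Nat.gcd ((j:ℕ)+1) N - 1 < n := by
    intro j
    have h1 : Nat.gcd ((j:ℕ)+1) N ∣ (j:ℕ)+1 := Nat.gcd_dvd_left _ _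
    have h2 := Nat.le_of_dvd (show 0 < (j:ℕ)+1 by omega) h1
    have h3 : 0 < Nat.gcd ((j:ℕ)+1) N := Nat.gcd_pos_of_pos_left _ (by omega)
    have := j.isLt
    omega
  set g : Fin n → Fin n := fun j => ⟨Nat.gcd ((j:ℕ)+1) N - 1, hgdef j⟩ with hg
  have hgcd1 : ∀ j : Fin n, ((g j : ℕ)) + 1 = Nat.gcd ((j:ℕ)+1) N := by
    intro j
    have h3 : 0 < Nat.gcd ((j:ℕ)+1) N := Nat.gcd_pos_of_pos_left _ (by omega)
    simp only [hg, Fin.val_mk]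
    omega
  have hgcd2 : ∀ j : Fin n, Nat.gcd ((g j : ℕ)+1) N = Nat.gcd ((j:ℕ)+1) N := by
    intro j
    rw [hgcd1 j]
    exact Nat.gcd_eq_left (Nat.gcd_dvd_right _ _)
  have hgs : ∀ j ∈ s, g j ∉ s := by
    intro j hj
    simp only [hs, Finset.mem_filter, Finset.mem_univ, true_and, not_not]
    rw [hgcd1 j]
    exact Nat.gcd_dvd_right _ _
  have hcong : ∀ j ∈ s, ∀ i, (2:ℤ) ∣ ((Bmat n) i j - (Bmat n) i (g j)) := by
    intro j _ i
    have d1 := Bmat_sub_ite n i j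
    have d2 := Bmat_sub_ite n i (g j)
    rw [hgcd2 j] at d2
    rw [hN] at d2
    have h5 := dvd_sub d1 d2
    rwa [sub_sub_sub_cancel_right] at h5
  have hdvd := dvd_det_of_cols s g (Bmat n) hgs hcong
  -- compute s.card
  have hcard : s.card = n + 1 - N.divisors.card := by
    have hsplit := Finset.card_filter_add_card_filter_not
      (s := (Finset.univ : Finset (Fin n))) (p := fun j : Fin n => (j:ℕ)+1 ∣ N)
    have hcardc : (Finset.univ.filter (fun j : Fin n => (j:ℕ)+1 ∣ N)).card
        = N.divisors.card - 1 := by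
      have hbij : (Finset.univ.filter (fun j : Fin n => (j:ℕ)+1 ∣ N)).card
          = (N.divisors.erase N).card := by
        refine Finset.card_bij (fun j _ => (j:ℕ)+1) ?_ ?_ ?_
        · intro j hj
          simp only [Finset.mem_filter, Finset.mem_univ, true_and] at hj
          rw [Finset.mem_erase, Nat.mem_divisors]
          have := j.isLt
          refine ⟨?_, hj, ?_⟩
          · show (j:ℕ) + 1 ≠ N
    
            omega
          · show N ≠ 0
            omega
        · intro j1 _ j2 _ h
          have h' : (j1:ℕ) + 1 = (j2:ℕ) + 1 := h
          apply Fin.ext; omega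
        · intro d hd
          rw [Finset.mem_erase, Nat.mem_divisors] at hd
          obtain ⟨hdne, hdvd', hNne⟩ := hd
          have hdpos : 0 < d := Nat.pos_of_dvd_of_pos hdvd' (by omega)
          obtain ⟨k, hk⟩ := hdvd'
          have hk1 : k ≠ 1 := by intro h; rw [h, mul_one] at hk; exact hdne hk.symm
          have hk2 : k ≠ 2 := by intro h; rw [h] at hk; omega
          have hk0 : k ≠ 0 := by intro h; rw [h, mul_zero] at hk; omega
          have h3d : 3 * d ≤ N := by
            calc 3 * d ≤ k * d := mul_le_mul_left (by omega : 3 ≤ k) d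
            _ = N := by rw [hk]; ring
          have hdn : d ≤ n := by omega
          refine ⟨⟨d - 1, by omega⟩, ?_, by simp; omega⟩
          simp only [Finset.mem_filter, Finset.mem_univ, true_and, Fin.val_mk]
          rw [show d - 1 + 1 = d by omega]
          exact ⟨k, hk⟩
      rw [hbij, Finset.card_erase_of_mem (Nat.mem_divisors_self N (by omega))]
    have hcards : s.card = n - (N.divisors.card - 1) := by
      rw [hs]
      have : (Finset.univ : Finset (Fin n)).card = n := by simp
      omega
    have hτ1 : 0 < N.divisors.card :=
      Finset.card_pos.mpr ⟨N, Nat.mem_divisors_self N (by omega)⟩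
    have hτn : N.divisors.card - 1 ≤ n := by
      rw [← hcardc]
      calc (Finset.univ.filter (fun j : Fin n => (j:ℕ)+1 ∣ N)).card
          ≤ (Finset.univ : Finset (Fin n)).card := Finset.card_filter_le _ _
      _ = n := by simp
    omega
  rw [hcard] at hdvd
  exact hdvd

lemma tan_factorization (n : ℕ) :
    tanMatrix 1 n = Emat n * ((2:ℝ) • (Bmat n).map (Int.cast : ℤ → ℝ)) := by
  ext i j
  exact entry_eq n i j


/-- For `n ≥ 1` and `N = 2n+1`, the real number `N^{−n/2}·det(T_{1,N})` is an integer
divisible by `2^{n+1−τ(N)}`, where `τ(N)` is the number of positive divisors of `N`: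
there is an integer `m` with `det(T_{1,N}) = 2^{n+1−τ(N)} · m · N^{n/2}`. -/
theorem det_tanMatrix_one (n : ℕ) (hn : 1 ≤ n) :
    ∃ m : ℤ, (tanMatrix 1 n).det =
      2 ^ (n + 1 - (2 * n + 1).divisors.card) * (m : ℝ) *
        Real.sqrt (2 * n + 1) ^ n := by
  obtain ⟨c, hc⟩ := Bmat_dvd_det n hn
  have hdetmap : ((Bmat n).map (Int.cast : ℤ → ℝ)).det = (((Bmat n).det : ℤ) : ℝ) :=
    (RingHom.map_det (Int.castRingHom ℝ) (Bmat n)).symm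
  have hdet : (tanMatrix 1 n).det = (Emat n).det * ((2:ℝ)^n * (((Bmat n).det : ℤ) : ℝ)) := by
    rw [tan_factorization n, Matrix.det_mul, Matrix.det_smul, hdetmap]
    simp [Fintype.card_fin]
  have hE2 : (Emat n).det ^ 2 = ((2*(n:ℝ)+1)/4)^n := by
    have h2 := congrArg Matrix.det (E_mul_Et n)
    rw [Matrix.det_mul, Matrix.det_transpose, Matrix.det_smul, Matrix.det_one, mul_one,
      Fintype.card_fin] at h2
    rw [sq]; exact h2
  set e : ℝ := Real.sqrt (2*(n:ℝ)+1) ^ n / 2^n with he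
  have hNnn : (0:ℝ) ≤ 2*(n:ℝ)+1 := by positivity
  have he2 : e^2 = ((2*(n:ℝ)+1)/4)^n := by
    rw [he, div_pow, pow_right_comm, Real.sq_sqrt hNnn, pow_right_comm, div_pow]
    norm_num
  have habs : (Emat n).det = e ∨ (Emat n).det = -e :=
    sq_eq_sq_iff_eq_or_eq_neg.mp (hE2.trans he2.symm)
  have h2n : (2:ℝ)^n ≠ 0 := by positivity
  rcases habs with h | h
  · refine ⟨c, ?_⟩
    rw [hdet, h, hc, he]
    push_cast
    field_simp
  · refine ⟨-c, ?_⟩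
    rw [hdet, h, hc, he]
    push_cast
    field_simp
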